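/- Let π be the softmax of A/τ on a finite action set and H(π) = -Σ_a π(a) log π(a) the Shannon entropy. Then the gradient of H(π) with respect to A satisfies, for the policy-gradient-style expression: Σ_a π(a) (A(a) - Σ_b π(b) A(b)) · ∇_A log π(a) = -τ ∇_A H(π), where ∇_A denotes the gradient with respect to the vector A ∈ ℝ^𝒜. -/

import Mathlib

/-- Softmax with temperature. -/
noncomputable def smax {𝒜 : Type*} [Fintype 𝒜] (τ : ℝ) (A : 𝒜 → ℝ) (a : 𝒜) : ℝ :=
  Real.exp (A a / τ) / ∑ b, Real.exp (A b / τ)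

lemma smax_pos {𝒜 : Type*} [Fintype 𝒜] [Nonempty 𝒜] (τ : ℝ) (A : 𝒜 → ℝ) (a : 𝒜) :
    0 < smax τ A a := by
  unfold smax
  exact div_pos (Real.exp_pos _) (Finset.sum_pos (fun b _ => Real.exp_pos _) Finset.univ_nonempty)

lemma sum_smax {𝒜 : Type*} [Fintype 𝒜] [Nonempty 𝒜] (τ : ℝ) (A : 𝒜 → ℝ) :
    ∑ a, smax τ A a = 1 := by
  unfold smax
  rw [← Finset.sum_div]
  exact div_self (ne_of_gt (Finset.sum_pos (fun b _ => Real.exp_pos _) Finset.univ_nonempty))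

lemma log_smax {𝒜 : Type*} [Fintype 𝒜] [Nonempty 𝒜] (τ : ℝ) (A : 𝒜 → ℝ) (a : 𝒜) :
    Real.log (smax τ A a) = A a / τ - Real.log (∑ b, Real.exp (A b / τ)) := by
  unfold smax
  rw [Real.log_div (Real.exp_ne_zero _)
    (ne_of_gt (Finset.sum_pos (fun b _ => Real.exp_pos _) Finset.univ_nonempty)), Real.log_exp]

lemma hasDerivAt_exp_update {𝒜 : Type*} [Fintype 𝒜] [DecidableEq 𝒜]
    (A : 𝒜 → ℝ) (τ : ℝ) (hτ : 0 < τ) (c a : 𝒜) :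
    HasDerivAt (fun x => Real.exp (Function.update A c x a / τ))
      (Real.exp (A a / τ) * ((if a = c then 1 else 0) / τ)) (A c) := by
  by_cases h : a = c
  · subst h
    simp only [Function.update_self, if_pos rfl]
    have := ((hasDerivAt_id (A a)).div_const τ).exp
    simpa using this
  · simp only [Function.update_of_ne h, if_neg h]
    simpa using hasDerivAt_const (A c) (Real.exp (A a / τ))

lemma hasDerivAt_smax {𝒜 : Type*} [Fintype 𝒜] [Nonempty 𝒜] [DecidableEq 𝒜]
    (A : 𝒜 → ℝ) (τ : ℝ) (hτ : 0 < τ) (c a : 𝒜) :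
    HasDerivAt (fun x => smax τ (Function.update A c x) a)
      (smax τ A a * ((if a = c then 1 else 0) - smax τ A c) / τ) (A c) := by
  have hZ : 0 < ∑ b, Real.exp (A b / τ) :=
    Finset.sum_pos (fun b _ => Real.exp_pos _) Finset.univ_nonempty
  have hN := hasDerivAt_exp_update A τ hτ c a
  have hD : HasDerivAt (fun x => ∑ b, Real.exp (Function.update A c x b / τ))
      (Real.exp (A c / τ) / τ) (A c) := by
    have := HasDerivAt.fun_sum (fun b (_ : b ∈ Finset.univ) => hasDerivAt_exp_update A τ hτ c b)
    have hval : ∑ b, Real.exp (A b / τ) * ((if b = c then (1:ℝ) else 0) / τ)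
        = Real.exp (A c / τ) / τ := by
      rw [Finset.sum_eq_single c]
      · rw [if_pos rfl]; ring
      · intro b _ hb; simp [hb]
      · simp
    rwa [hval] at this
  have hdiv := hN.fun_div hD (by
    simp only [Function.update_eq_self]
    exact ne_of_gt hZ)
  have : (fun x => Real.exp (Function.update A c x a / τ) /
      ∑ b, Real.exp (Function.update A c x b / τ))
      = fun x => smax τ (Function.update A c x) a := rfl
  rw [this] at hdiv
  refine hdiv.congr_deriv ?_; symm
  simp only [Function.update_eq_self]
  unfold smax
  by_cases h : a = c
  · simp only [if_pos h]
    field_simp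
  · simp only [if_neg h]
    field_simp

/-- Σ_a π(a)(A(a) - E_π[A]) ∇_A log π(a) = -τ ∇_A H(π), coordinatewise in c. -/
theorem stmt2 {𝒜 : Type*} [Fintype 𝒜] [Nonempty 𝒜] [DecidableEq 𝒜]
    (A : 𝒜 → ℝ) (τ : ℝ) (hτ : 0 < τ) (c : 𝒜) (h' : ℝ)
    (hH : HasDerivAt
      (fun x : ℝ =>
        -∑ a, smax τ (Function.update A c x) a * Real.log (smax τ (Function.update A c x) a))
      h' (A c)) :
    ∑ a, smax τ A a * (A a - ∑ b, smax τ A b * A b) *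
        (((if a = c then (1 : ℝ) else 0) - smax τ A c) / τ)
      = -τ * h' := by
  set s : 𝒜 → ℝ := smax τ A with hs_def
  have hspos : ∀ a, 0 < s a := fun a => smax_pos τ A a
  -- derivative of entropy
  have hE : HasDerivAt
      (fun x : ℝ =>
        -∑ a, smax τ (Function.update A c x) a * Real.log (smax τ (Function.update A c x) a))
      (-∑ a, (s a * ((if a = c then 1 else 0) - s c) / τ) * (Real.log (s a) + 1)) (A c) := by
    apply HasDerivAt.neg
    have := HasDerivAt.fun_sum (fun a (_ : a ∈ Finset.univ) =>
      ((hasDerivAt_smax A τ hτ c a).fun_mul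
        ((hasDerivAt_smax A τ hτ c a).log (by
          simp only [Function.update_eq_self]
          exact ne_of_gt (hspos a)))))
    simp only [Function.update_eq_self] at this
    convert this using 1
    apply Finset.sum_congr rfl
    intro a _
    have hne : s a ≠ 0 := ne_of_gt (hspos a)
    have hτ' : τ ≠ 0 := ne_of_gt hτ
    field_simp
    ring
  have hh : h' = -∑ a, (s a * ((if a = c then 1 else 0) - s c) / τ) * (Real.log (s a) + 1) :=
    hH.unique hE
  -- algebra
  have hsum1 : ∑ a, s a = 1 := sum_smax τ A
  have hlog : ∀ a, Real.log (s a) = A a / τ - Real.log (∑ b, Real.exp (A b / τ)) :=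
    fun a => log_smax τ A a
  -- key sum lemma: ∑ a, s a * X a * ((δ a c) - s c) = s c * X c - s c * ∑ a, s a * X a
  have key : ∀ X : 𝒜 → ℝ,
      ∑ a, s a * X a * ((if a = c then (1:ℝ) else 0) - s c)
        = s c * X c - s c * ∑ a, s a * X a := by
    intro X
    have : ∀ a, s a * X a * ((if a = c then (1:ℝ) else 0) - s c)
        = (if a = c then s c * X c else 0) - s c * (s a * X a) := by
      intro a
      by_cases h : a = c
      · subst h; simp; ring
      · simp [h]; ring
    rw [Finset.sum_congr rfl (fun a _ => this a), Finset.sum_sub_distrib,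
      Finset.sum_ite_eq' Finset.univ c (fun _ => s c * X c), ← Finset.mul_sum]
    simp
  rw [hh]
  have hL : ∑ a, s a * (A a - ∑ b, s b * A b) *
      (((if a = c then (1 : ℝ) else 0) - s c) / τ)
      = (1/τ) * ∑ a, s a * (A a - ∑ b, s b * A b) * ((if a = c then (1:ℝ) else 0) - s c) := by
    rw [Finset.mul_sum]; apply Finset.sum_congr rfl; intro a _; ring
  rw [hL, key (fun a => A a - ∑ b, s b * A b)]
  have hzero : ∑ a, s a * (A a - ∑ b, s b * A b) = 0 := by
    have : ∑ a, s a * (A a - ∑ b, s b * A b)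
        = ∑ a, s a * A a - (∑ a, s a) * ∑ b, s b * A b := by
      rw [Finset.sum_mul]
      rw [← Finset.sum_sub_distrib]
      apply Finset.sum_congr rfl; intro a _; ring
    rw [this, hsum1]; ring
  rw [hzero]
  -- RHS: -τ * (-(∑ ...)) = ∑ s a (δ - s c)(log s a + 1)
  have hR : -τ * (-∑ a, (s a * ((if a = c then 1 else 0) - s c) / τ) * (Real.log (s a) + 1))
      = ∑ a, s a * (Real.log (s a) + 1) * ((if a = c then (1:ℝ) else 0) - s c) := by
    rw [neg_mul_neg, Finset.mul_sum]
    apply Finset.sum_congr rfl; intro a _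
    field_simp
  rw [hR, key (fun a => Real.log (s a) + 1)]
  have hSL : ∑ a, s a * (Real.log (s a) + 1) = (∑ a, s a * Real.log (s a)) + 1 := by
    have h1 : ∑ a, s a * (Real.log (s a) + 1) = (∑ a, s a * Real.log (s a)) + ∑ a, s a := by
      rw [← Finset.sum_add_distrib]
      exact Finset.sum_congr rfl fun a _ => by ring
    rw [h1, hsum1]
  rw [hSL]
  have hlogsum : ∑ a, s a * Real.log (s a)
      = (∑ a, s a * A a) / τ - Real.log (∑ b, Real.exp (A b / τ)) := by
    have : ∀ a, s a * Real.log (s a)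
        = (s a * A a) / τ - s a * Real.log (∑ b, Real.exp (A b / τ)) := by
      intro a; rw [hlog a]; ring
    rw [Finset.sum_congr rfl (fun a _ => this a), Finset.sum_sub_distrib, ← Finset.sum_div,
      ← Finset.sum_mul, hsum1]
    simp
  rw [hlogsum, hlog c]
  field_simp
  ring
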